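/- arXiv:1010.2770 — 2 statements merged into one kernel-verified Lean document; each statement's English description precedes it below -/
import Mathlib

section
/- (One-round descent inequality for the online proximal algorithm.) Let Θ ⊆ ℝ^d be a closed convex set, let λ ≥ 0, η > 0, and G ≥ 0. Let L : ℝ^d → ℝ be convex and G-Lipschitz on Θ, and let R = R₁ + ⋯ + R_J where each R_j : ℝ^d → ℝ ∪ {+∞} is convex, lower semicontinuous and proper. Assume: (ii) for all θ ∈ ℝ^d and all j' < j, R_{j'}(θ) ≥ R_{j'}(prox_{ηλR_j}(θ)); and (iii) R(θ) ≥ R(Π_Θ(θ)) for all θ, where Π_Θ is the Euclidean projection onto Θ. Let θ_t ∈ Θ, let g ∈ ∂L(θ_t), set θ̃_{t+0/J} = θ_t − ηg, set θ̃_{t+j/J} = prox_{ηλR_j}(θ̃_{t+(j−1)/J}) for j = 1, …, J, and set θ_{t+1} = Π_Θ(θ̃_{t+J/J}). Then for every θ̄ ∈ Θ: L(θ_t) + λR(θ_{t+1}) ≤ L(θ̄) + λR(θ̄) + (η/2)G² + (‖θ̄ − θ_t‖² − ‖θ̄ − θ_{t+1}‖²)/(2η). -/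
open RealInnerProductSpace

noncomputable section

/-- Extended-real-valued convexity of `φ : E → ℝ ∪ {+∞}`. -/
def ERealConvexOn {E : Type*} [NormedAddCommGroup E] [InnerProductSpace ℝ E]
    (φ : E → EReal) : Prop :=
  ∀ x y : E, ∀ t : ℝ, 0 ≤ t → t ≤ 1 →
    φ (t • x + (1 - t) • y) ≤ (t : EReal) * φ x + ((1 - t : ℝ) : EReal) * φ y

/-- `φ` is proper: it never takes the value `−∞` (functions into `ℝ ∪ {+∞}`
never do) and is finite somewhere. -/
def ERealProper {E : Type*} (φ : E → EReal) : Prop :=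
  (∃ x, φ x ≠ ⊤) ∧ ∀ x, φ x ≠ ⊥

/-- `x` is the proximity point `prox_φ(y)`, i.e. a minimizer of
`z ↦ (1/2)‖z − y‖² + φ(z)`. -/
def IsProxPt {E : Type*} [NormedAddCommGroup E] (φ : E → EReal) (y x : E) : Prop :=
  ∀ z : E, (((1/2) * ‖x - y‖^2 : ℝ) : EReal) + φ x ≤ (((1/2) * ‖z - y‖^2 : ℝ) : EReal) + φ z

/-- The Moreau envelope `M_φ(y) = inf_x (1/2)‖x − y‖² + φ(x)`. -/
def moreauEnvelope {E : Type*} [NormedAddCommGroup E] (φ : E → EReal) (y : E) : EReal :=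
  ⨅ x : E, (((1/2) * ‖x - y‖^2 : ℝ) : EReal) + φ x

/-- The Fenchel conjugate `φ⋆(y) = sup_x ⟨y, x⟩ − φ(x)`. -/
def fenchelConjugate {E : Type*} [NormedAddCommGroup E] [InnerProductSpace ℝ E]
    (φ : E → EReal) (y : E) : EReal :=
  ⨆ x : E, ((⟪y, x⟫ : ℝ) : EReal) - φ x

/-- `g` is a subgradient of the convex function `L` at `θ₀`. -/
def IsSubgradientAt {E : Type*} [NormedAddCommGroup E] [InnerProductSpace ℝ E]
    (L : E → ℝ) (g θ₀ : E) : Prop :=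
  ∀ θ : E, (⟪g, θ - θ₀⟫ : ℝ) ≤ L θ - L θ₀

/-- `x = prox_{c·φ}(y)`: `x` minimizes `z ↦ (1/2)‖z − y‖² + c·φ(z)`. -/
def IsProxPtOf {E : Type*} [NormedAddCommGroup E] (c : ℝ) (φ : E → EReal) (y x : E) : Prop :=
  ∀ z : E, (((1/2) * ‖x - y‖^2 : ℝ) : EReal) + (c : EReal) * φ x
    ≤ (((1/2) * ‖z - y‖^2 : ℝ) : EReal) + (c : EReal) * φ z

/-- `x = Π_Θ(y)`: `x` is the Euclidean projection of `y` onto `Θ`. -/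
def IsProjPt {E : Type*} [NormedAddCommGroup E] (Θ : Set E) (y x : E) : Prop :=
  x ∈ Θ ∧ ∀ z ∈ Θ, ‖x - y‖ ≤ ‖z - y‖

section AuxLemmas
variable {E : Type*} [NormedAddCommGroup E] [InnerProductSpace ℝ E]

lemma aux_le_of_forall01 {A B K : ℝ} (hK : 0 ≤ K)
    (h : ∀ t : ℝ, 0 < t → t ≤ 1 → A ≤ B + t * K) : A ≤ B := by
  by_contra hc
  push_neg at hc
  set t := min 1 ((A - B) / (2 * (K + 1))) with ht
  have h1 : 0 < (A - B) / (2 * (K + 1)) := div_pos (by linarith) (by linarith)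
  have ht0 : 0 < t := lt_min one_pos h1
  have ht1 : t ≤ 1 := min_le_left _ _
  have h2 := h t ht0 ht1
  have htr : t ≤ (A - B) / (2 * (K + 1)) := min_le_right _ _
  have htK : t * K ≤ (A - B) / 2 := by
    calc t * K ≤ (A - B) / (2 * (K + 1)) * K :=
          mul_le_mul_of_nonneg_right htr hK
    _ ≤ (A - B) / 2 := by
        rw [div_mul_eq_mul_div, div_le_div_iff₀ (by linarith) (by norm_num)]
        nlinarith
  linarith

lemma norm_add_smul_sq (u v : E) (t : ℝ) :
    ‖u + t • v‖^2 = ‖u‖^2 + 2 * t * ⟪u, v⟫ + t^2 * ‖v‖^2 := by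
  rw [norm_add_sq_real, real_inner_smul_right, norm_smul, mul_pow,
    Real.norm_eq_abs, sq_abs]
  ring

lemma prox_finite {c : ℝ} (hc : 0 < c) {φ : E → EReal} (hbot : ∀ x, φ x ≠ ⊥)
    {y x z : E} (hx : IsProxPtOf c φ y x) (hz : φ z ≠ ⊤) : φ x ≠ ⊤ := by
  intro htop
  have h := hx z
  rw [htop] at h
  rw [show (c : EReal) * φ z = ((c * (φ z).toReal : ℝ) : EReal) by
      rw [EReal.coe_mul, EReal.coe_toReal hz (hbot z)],
    EReal.coe_mul_top_of_pos hc,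
    EReal.add_top_of_ne_bot (EReal.coe_ne_bot _), ← EReal.coe_add] at h
  exact lt_irrefl _ (lt_of_le_of_lt h (EReal.coe_lt_top _))

lemma prox_threePoint {c : ℝ} (hc : 0 < c) {φ : E → EReal}
    (hconv : ERealConvexOn φ) (hbot : ∀ x, φ x ≠ ⊥)
    {y x z : E} (hx : IsProxPtOf c φ y x) (hz : φ z ≠ ⊤) :
    c * (φ x).toReal + (1/2) * ‖x - y‖^2 + (1/2) * ‖z - x‖^2
      ≤ c * (φ z).toReal + (1/2) * ‖z - y‖^2 := by
  have hxt : φ x ≠ ⊤ := prox_finite hc hbot hx hz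
  set a := (φ x).toReal with ha
  set b := (φ z).toReal with hb
  have hφx : φ x = (a : EReal) := (EReal.coe_toReal hxt (hbot x)).symm
  have hφz : φ z = (b : EReal) := (EReal.coe_toReal hz (hbot z)).symm
  have key : c * (a - b) ≤ ⟪x - y, z - x⟫ := by
    apply aux_le_of_forall01 (K := (1/2) * ‖z - x‖^2) (by positivity)
    intro t ht0 ht1
    set w := t • z + (1 - t) • x with hw
    have hwx : w = x + t • (z - x) := by
      rw [hw, smul_sub, sub_smul, one_smul]; abel
    have hcv := hconv z x t (le_of_lt ht0) ht1
    rw [← hw, hφx, hφz, ← EReal.coe_mul, ← EReal.coe_mul, ← EReal.coe_add] at hcv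
    have hwt : φ w ≠ ⊤ := by
      intro h; rw [h] at hcv
      exact lt_irrefl _ (lt_of_le_of_lt hcv (EReal.coe_lt_top _))
    set wv := (φ w).toReal with hwv
    have hφw : φ w = (wv : EReal) := (EReal.coe_toReal hwt (hbot w)).symm
    rw [hφw, EReal.coe_le_coe_iff] at hcv
    have hpx := hx w
    rw [hφx, hφw, ← EReal.coe_mul, ← EReal.coe_mul, ← EReal.coe_add,
      ← EReal.coe_add, EReal.coe_le_coe_iff] at hpx
    have hnw : ‖w - y‖^2 = ‖x - y‖^2 + 2 * t * ⟪x - y, z - x⟫ + t^2 * ‖z - x‖^2 := by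
      rw [show w - y = (x - y) + t • (z - x) by rw [hwx]; abel, norm_add_smul_sq]
    have hmul : t * (c * (a - b)) ≤ t * (⟪x - y, z - x⟫ + t * ((1/2) * ‖z - x‖^2)) := by
      nlinarith [hpx, hcv, hnw, mul_le_mul_of_nonneg_left hcv (le_of_lt hc)]
    exact le_of_mul_le_mul_left hmul ht0
  have hid : ‖z - y‖^2 = ‖z - x‖^2 + 2 * ⟪z - x, x - y⟫ + ‖x - y‖^2 := by
    rw [show z - y = (z - x) + (x - y) by abel, norm_add_sq_real]
  have hcomm := real_inner_comm (x - y) (z - x)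
  linarith

lemma proj_sq_le {Θ : Set E} (hΘ : Convex ℝ Θ) {y x : E} (h : IsProjPt Θ y x)
    {z : E} (hz : z ∈ Θ) : ‖z - x‖^2 ≤ ‖z - y‖^2 := by
  obtain ⟨hxΘ, hmin⟩ := h
  have hinner : (0:ℝ) ≤ ⟪x - y, z - x⟫ := by
    apply aux_le_of_forall01 (K := (1/2) * ‖z - x‖^2) (by positivity)
    intro t ht0 ht1
    have hwΘ : (1 - t) • x + t • z ∈ Θ := hΘ hxΘ hz (by linarith) (le_of_lt ht0) (by ring)
    have hle := hmin _ hwΘ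
    have hsq : ‖x - y‖^2 ≤ ‖(1 - t) • x + t • z - y‖^2 :=
      pow_le_pow_left₀ (norm_nonneg _) hle 2
    have hnw : ‖(1 - t) • x + t • z - y‖^2
        = ‖x - y‖^2 + 2 * t * ⟪x - y, z - x⟫ + t^2 * ‖z - x‖^2 := by
      rw [show (1 - t) • x + t • z - y = (x - y) + t • (z - x) by
          rw [smul_sub, sub_smul, one_smul]; abel, norm_add_smul_sq]
    have : 0 ≤ 2 * t * ⟪x - y, z - x⟫ + t^2 * ‖z - x‖^2 := by linarith [hsq, hnw ▸ hsq]
    nlinarith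
  have hid : ‖z - y‖^2 = ‖z - x‖^2 + 2 * ⟪z - x, x - y⟫ + ‖x - y‖^2 := by
    rw [show z - y = (z - x) + (x - y) by abel, norm_add_sq_real]
  have hcomm := real_inner_comm (x - y) (z - x)
  nlinarith [sq_nonneg ‖x - y‖]

lemma sum_ne_bot {ι : Type*} (s : Finset ι) (f : ι → EReal)
    (h : ∀ i ∈ s, f i ≠ ⊥) : ∑ i ∈ s, f i ≠ ⊥ := by
  induction s using Finset.cons_induction with
  | empty => simp
  | cons a s ha ih =>
    rw [Finset.sum_cons]
    intro hcon
    rcases EReal.add_eq_bot_iff.1 hcon with h1 | h1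
    · exact h a (Finset.mem_cons_self a s) h1
    · exact ih (fun i hi => h i (Finset.mem_cons_of_mem hi)) h1

lemma sum_eq_top {ι : Type*} (s : Finset ι) (f : ι → EReal)
    (hbot : ∀ i ∈ s, f i ≠ ⊥) {i : ι} (hi : i ∈ s) (htop : f i = ⊤) :
    ∑ j ∈ s, f j = ⊤ := by
  classical
  rw [← Finset.add_sum_erase s f hi, htop]
  exact EReal.top_add_of_ne_bot (sum_ne_bot _ _
    (fun j hj => hbot j (Finset.mem_of_mem_erase hj)))

lemma coe_sum {ι : Type*} (s : Finset ι) (f : ι → ℝ) :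
    ((∑ i ∈ s, f i : ℝ) : EReal) = ∑ i ∈ s, (f i : EReal) :=
  map_sum (⟨⟨Real.toEReal, EReal.coe_zero⟩, EReal.coe_add⟩ : ℝ →+ EReal) f s

end AuxLemmas

/-- one-round descent inequality for the online proximal algorithm. -/
theorem online_prox_one_round {d J : ℕ} (hJ : 0 < J)
    (Θ : Set (EuclideanSpace ℝ (Fin d))) (hΘc : IsClosed Θ) (hΘconv : Convex ℝ Θ)
    (lam η G : ℝ) (hlam : 0 ≤ lam) (hη : 0 < η) (hG : 0 ≤ G)
    (L : EuclideanSpace ℝ (Fin d) → ℝ) (hLconv : ConvexOn ℝ Set.univ L)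
    (hLlip : ∀ θ₀ ∈ Θ, ∀ g : EuclideanSpace ℝ (Fin d), IsSubgradientAt L g θ₀ → ‖g‖ ≤ G)
    (R : Fin J → EuclideanSpace ℝ (Fin d) → EReal)
    (hRconv : ∀ j, ERealConvexOn (R j)) (hRlsc : ∀ j, LowerSemicontinuous (R j))
    (hRprop : ∀ j, ERealProper (R j))
    -- condition (ii): each prox operator does not increase the previous `R_{j'}`
    (hii : ∀ j j' : Fin J, j' < j → ∀ θ θ' : EuclideanSpace ℝ (Fin d),
      IsProxPtOf (η * lam) (R j) θ θ' → R j' θ' ≤ R j' θ)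
    -- condition (iii): projecting onto `Θ` does not increase `R`
    (hiii : ∀ θ θ' : EuclideanSpace ℝ (Fin d), IsProjPt Θ θ θ' →
      (∑ j, R j θ') ≤ ∑ j, R j θ)
    -- one round of the algorithm
    (θt : EuclideanSpace ℝ (Fin d)) (hθt : θt ∈ Θ)
    (g : EuclideanSpace ℝ (Fin d)) (hg : IsSubgradientAt L g θt)
    (θtil : Fin (J + 1) → EuclideanSpace ℝ (Fin d))
    (h0 : θtil 0 = θt - η • g)
    (hsteps : ∀ j : Fin J, IsProxPtOf (η * lam) (R j) (θtil j.castSucc) (θtil j.succ))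
    (θnext : EuclideanSpace ℝ (Fin d)) (hproj : IsProjPt Θ (θtil (Fin.last J)) θnext)
    (θbar : EuclideanSpace ℝ (Fin d)) (hθbar : θbar ∈ Θ) :
    ((L θt : ℝ) : EReal) + (lam : EReal) * (∑ j, R j θnext)
      ≤ ((L θbar : ℝ) : EReal) + (lam : EReal) * (∑ j, R j θbar)
        + ((η / 2 * G ^ 2 + (‖θbar - θt‖ ^ 2 - ‖θbar - θnext‖ ^ 2) / (2 * η) : ℝ) : EReal) := by
  have hgG : ‖g‖ ≤ G := hLlip θt hθt g hg
  have hgL : ⟪g, θbar - θt⟫ ≤ L θbar - L θt := hg θbar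
  have hG2 : ‖g‖ ^ 2 ≤ G ^ 2 := pow_le_pow_left₀ (norm_nonneg g) hgG 2
  have hcomm := real_inner_comm g (θbar - θt)
  rcases eq_or_lt_of_le hlam with hlam0 | hlampos
  · -- case lam = 0
    subst hlam0
    simp only [EReal.coe_zero, EReal.zero_mul, add_zero]
    -- all prox steps are the identity
    have hid : ∀ k : Fin J, θtil k.succ = θtil k.castSucc := by
      intro k
      have h := hsteps k (θtil k.castSucc)
      simp only [mul_zero, EReal.coe_zero, EReal.zero_mul, add_zero, sub_self,
        norm_zero] at h
      rw [EReal.coe_le_coe_iff] at h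
      have h2 : ‖θtil k.succ - θtil k.castSucc‖ = 0 := by
        nlinarith [norm_nonneg (θtil k.succ - θtil k.castSucc)]
      rw [← sub_eq_zero, ← norm_eq_zero]
      exact h2
    have hall : ∀ k : Fin (J + 1), θtil k = θtil 0 := by
      intro k
      induction k using Fin.induction with
      | zero => rfl
      | succ i ih => rw [hid i]; exact ih
    have hprojsq : ‖θbar - θnext‖ ^ 2 ≤ ‖θbar - (θt - η • g)‖ ^ 2 := by
      have h := proj_sq_le hΘconv hproj hθbar
      rwa [hall (Fin.last J), h0] at h
    have hexp : ‖θbar - (θt - η • g)‖ ^ 2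
        = ‖θbar - θt‖ ^ 2 + 2 * η * ⟪θbar - θt, g⟫ + η ^ 2 * ‖g‖ ^ 2 := by
      rw [show θbar - (θt - η • g) = (θbar - θt) + η • g by abel, norm_add_smul_sq]
    rw [← EReal.coe_add, EReal.coe_le_coe_iff]
    have key : (L θt - L θbar - η / 2 * G ^ 2) * (2 * η)
        ≤ ‖θbar - θt‖ ^ 2 - ‖θbar - θnext‖ ^ 2 := by
      nlinarith [hprojsq, hexp, hG2, hgL, hcomm,
        mul_le_mul_of_nonneg_left hgL (by linarith : (0:ℝ) ≤ 2 * η),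
        mul_le_mul_of_nonneg_left hG2 (sq_nonneg η)]
    have h2 := (le_div_iff₀ (by linarith : (0:ℝ) < 2 * η)).2 key
    linarith
  · by_cases htopall : ∀ j, R j θbar ≠ ⊤
    · -- main case
      have hcpos : 0 < η * lam := mul_pos hη hlampos
      set x : ℕ → EuclideanSpace ℝ (Fin d) := fun k => θtil ⟨min k J, by omega⟩ with hxdef
      have hx0 : x 0 = θt - η • g := by
        have he : (⟨min 0 J, by omega⟩ : Fin (J + 1)) = 0 := Fin.ext (by simp)
        show θtil ⟨min 0 J, by omega⟩ = _
        rw [he, h0]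
      have hxJ : x J = θtil (Fin.last J) := by
        have he : (⟨min J J, by omega⟩ : Fin (J + 1)) = Fin.last J :=
          Fin.ext (by simp [Fin.last])
        show θtil ⟨min J J, by omega⟩ = _
        rw [he]
      have hstep : ∀ k, (hk : k < J) → IsProxPtOf (η * lam) (R ⟨k, hk⟩) (x k) (x (k + 1)) := by
        intro k hk
        have e1 : x k = θtil (Fin.castSucc ⟨k, hk⟩) := by
          have he : (⟨min k J, by omega⟩ : Fin (J + 1)) = Fin.castSucc ⟨k, hk⟩ :=
            Fin.ext (by simp only [Fin.coe_castSucc]; exact min_eq_left (by omega))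
          show θtil ⟨min k J, by omega⟩ = _
          rw [he]
        have e2 : x (k + 1) = θtil (Fin.succ ⟨k, hk⟩) := by
          have he : (⟨min (k + 1) J, by omega⟩ : Fin (J + 1)) = Fin.succ ⟨k, hk⟩ :=
            Fin.ext (by simp only [Fin.val_succ]; exact min_eq_left (by omega))
          show θtil ⟨min (k + 1) J, by omega⟩ = _
          rw [he]
        rw [e1, e2]
        exact hsteps ⟨k, hk⟩
      have hbotR : ∀ j : Fin J, ∀ p, R j p ≠ ⊥ := fun j => (hRprop j).2
      have hfina : ∀ k, (hk : k < J) → R ⟨k, hk⟩ (x (k + 1)) ≠ ⊤ :=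
        fun k hk => prox_finite hcpos (hbotR _) (hstep k hk) (htopall _)
      set a : ℕ → ℝ := fun k =>
        if hk : k < J then (R ⟨k, hk⟩ (x (k + 1))).toReal else 0 with ha
      set b : ℕ → ℝ := fun k =>
        if hk : k < J then (R ⟨k, hk⟩ θbar).toReal else 0 with hb
      have h3 : ∀ k, (hk : k < J) →
          η * lam * a k + (1/2) * ‖θbar - x (k + 1)‖ ^ 2
            ≤ η * lam * b k + (1/2) * ‖θbar - x k‖ ^ 2 := by
        intro k hk
        have h := prox_threePoint hcpos (hRconv _) (hbotR _) (hstep k hk)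
          (htopall ⟨k, hk⟩)
        simp only [ha, hb, dif_pos hk]
        linarith [h, sq_nonneg ‖x (k + 1) - x k‖]
      have htel : ∀ m, m ≤ J →
          η * lam * (∑ k ∈ Finset.range m, a k) + (1/2) * ‖θbar - x m‖ ^ 2
            ≤ η * lam * (∑ k ∈ Finset.range m, b k) + (1/2) * ‖θbar - x 0‖ ^ 2 := by
        intro m
        induction m with
        | zero => simp
        | succ n ih =>
          intro hm
          have hn : n < J := hm
          have h1 := h3 n hn
          have ihn := ih (le_of_lt hn)
          rw [Finset.sum_range_succ, Finset.sum_range_succ, mul_add, mul_add]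
          linarith
      have hchain : ∀ j : Fin J, R j (x J) ≤ R j (x ((j : ℕ) + 1)) := by
        intro j
        have hind : ∀ m, (j : ℕ) + 1 ≤ m → m ≤ J → R j (x m) ≤ R j (x ((j : ℕ) + 1)) := by
          intro m
          induction m with
          | zero => intro h1 _; omega
          | succ n ih =>
            intro h1 h2
            by_cases hn : (j : ℕ) + 1 ≤ n
            · have hnJ : n < J := by omega
              have hlt : j < (⟨n, hnJ⟩ : Fin J) :=
                Fin.lt_def.2 (show (j : ℕ) < n by omega)
              exact le_trans (hii ⟨n, hnJ⟩ j hlt (x n) (x (n + 1)) (hstep n hnJ))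
                (ih hn (by omega))
            · have he : n + 1 = (j : ℕ) + 1 := by omega
              rw [he]
        exact hind J (by omega) le_rfl
      have hsumnext : (∑ j, R j θnext) ≤ ∑ j : Fin J, R j (x ((j : ℕ) + 1)) := by
        refine le_trans ?_ (Finset.sum_le_sum fun j _ => hchain j)
        have h := hiii (θtil (Fin.last J)) θnext hproj
        rwa [← hxJ] at h
      have hcoe_a : (∑ j : Fin J, R j (x ((j : ℕ) + 1)))
          = ((∑ k ∈ Finset.range J, a k : ℝ) : EReal) := by
        rw [coe_sum, ← Fin.sum_univ_eq_sum_range (fun k => ((a k : ℝ) : EReal)) J]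
        refine Finset.sum_congr rfl fun j _ => ?_
        have : a (j : ℕ) = (R j (x ((j : ℕ) + 1))).toReal := by
          rw [ha]; simp only [dif_pos j.isLt]
        rw [this]
        exact (EReal.coe_toReal (hfina (j : ℕ) j.isLt) (hbotR j _)).symm
      have hcoe_b : (∑ j, R j θbar)
          = ((∑ k ∈ Finset.range J, b k : ℝ) : EReal) := by
        rw [coe_sum, ← Fin.sum_univ_eq_sum_range (fun k => ((b k : ℝ) : EReal)) J]
        refine Finset.sum_congr rfl fun j _ => ?_
        have : b (j : ℕ) = (R j θbar).toReal := by
          rw [hb]; simp only [dif_pos j.isLt]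
        rw [this]
        exact (EReal.coe_toReal (htopall j) (hbotR j _)).symm
      have hlamE : (0 : EReal) ≤ (lam : EReal) := by
        exact_mod_cast hlam
      have hstep1 : ((L θt : ℝ) : EReal) + (lam : EReal) * (∑ j, R j θnext)
          ≤ ((L θt : ℝ) : EReal)
            + (((lam * ∑ k ∈ Finset.range J, a k : ℝ)) : EReal) := by
        refine add_le_add_right ?_ _
        rw [EReal.coe_mul]
        exact mul_le_mul_of_nonneg_left (hsumnext.trans_eq hcoe_a) hlamE
      refine le_trans hstep1 ?_
      rw [hcoe_b, ← EReal.coe_mul, ← EReal.coe_add, ← EReal.coe_add, ← EReal.coe_add,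
        EReal.coe_le_coe_iff]
      have hprojsq : ‖θbar - θnext‖ ^ 2 ≤ ‖θbar - x J‖ ^ 2 := by
        rw [hxJ]; exact proj_sq_le hΘconv hproj hθbar
      have hexp : ‖θbar - x 0‖ ^ 2
          = ‖θbar - θt‖ ^ 2 + 2 * η * ⟪θbar - θt, g⟫ + η ^ 2 * ‖g‖ ^ 2 := by
        rw [hx0, show θbar - (θt - η • g) = (θbar - θt) + η • g by abel, norm_add_smul_sq]
      have htelJ := htel J le_rfl
      have key : (L θt + lam * (∑ k ∈ Finset.range J, a k)
          - (L θbar + lam * (∑ k ∈ Finset.range J, b k) + η / 2 * G ^ 2)) * (2 * η)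
          ≤ ‖θbar - θt‖ ^ 2 - ‖θbar - θnext‖ ^ 2 := by
        have hf3 : η * ⟪θbar - θt, g⟫ ≤ η * (L θbar - L θt) := by
          rw [hcomm]; exact mul_le_mul_of_nonneg_left hgL hη.le
        have hf4 : η ^ 2 * ‖g‖ ^ 2 ≤ η ^ 2 * G ^ 2 :=
          mul_le_mul_of_nonneg_left hG2 (sq_nonneg η)
        clear_value x a b
        have hcomb : η * lam * (∑ k ∈ Finset.range J, a k)
            + (1/2) * ‖θbar - θnext‖ ^ 2
            ≤ η * lam * (∑ k ∈ Finset.range J, b k) + (1/2) * ‖θbar - θt‖ ^ 2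
              + η * (L θbar - L θt) + η ^ 2 / 2 * G ^ 2 := by
          linarith [htelJ, hprojsq, hexp, hf3, hf4]
        linarith [hcomb]
      have h2 := (le_div_iff₀ (by linarith : (0:ℝ) < 2 * η)).2 key
      linarith
    · -- some R j θbar = ⊤
      push_neg at htopall
      obtain ⟨j0, hj0⟩ := htopall
      have hsumtop : (∑ j, R j θbar) = ⊤ :=
        sum_eq_top _ _ (fun i _ => (hRprop i).2 θbar) (Finset.mem_univ j0) hj0
      rw [hsumtop, EReal.coe_mul_top_of_pos hlampos,
        EReal.add_top_of_ne_bot (EReal.coe_ne_bot _),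
        EReal.top_add_of_ne_bot (EReal.coe_ne_bot _)]
      exact le_top
end
end

section
/- (Logarithmic regret for strongly convex losses.) In the setting of the online proximal algorithm with θ₁ = 0 ∈ Θ, composite regularizer R = R₁ + ⋯ + R_J satisfying the shrinkage conditions, R ≥ 0 and R(0) = 0, assume each loss L_t is convex, G-Lipschitz on Θ, and σ-strongly convex (σ > 0), and use learning rates η_t = 1/(σt). Then the regret satisfies Reg_T ≤ G²(1 + log T)/(2σ). -/
open RealInnerProductSpace

noncomputable section

namespace RegAux

lemma nonneg_of_forall_unit {A B : ℝ} (hB : 0 ≤ B)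
    (h : ∀ t : ℝ, 0 < t → t ≤ 1 → 0 ≤ A + t * B) : 0 ≤ A := by
  rcases eq_or_lt_of_le hB with hB0 | hB0
  · have := h 1 one_pos le_rfl; rw [← hB0] at this; linarith
  · refine le_of_forall_pos_le_add fun ε hε => ?_
    have ht0 : 0 < min 1 (ε / B) := lt_min one_pos (div_pos hε hB0)
    have h1 := h _ ht0 (min_le_left _ _)
    have h2 : min 1 (ε / B) * B ≤ ε := by
      calc min 1 (ε / B) * B ≤ (ε / B) * B :=
            mul_le_mul_of_nonneg_right (min_le_right _ _) hB
        _ = ε := by field_simp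
    linarith

lemma coe_sum {ι : Type*} (s : Finset ι) (f : ι → ℝ) :
    ((∑ i ∈ s, f i : ℝ) : EReal) = ∑ i ∈ s, ((f i : ℝ) : EReal) := by
  induction s using Finset.cons_induction with
  | empty => simp
  | cons a s ha ih => rw [Finset.sum_cons, Finset.sum_cons, EReal.coe_add, ih]

lemma mul_ne_bot {r : ℝ} (hr : 0 ≤ r) {a : EReal} (h : a ≠ ⊥) : (r:EReal) * a ≠ ⊥ := by
  rcases eq_or_lt_of_le hr with h0 | h0
  · simp [← h0]
  · induction a with
    | bot => exact absurd rfl h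
    | coe x => simp [← EReal.coe_mul]
    | top => simp [EReal.coe_mul_top_of_pos h0]

lemma sum_ne_bot {ι : Type*} (s : Finset ι) (f : ι → EReal) (h : ∀ i ∈ s, f i ≠ ⊥) :
    ∑ i ∈ s, f i ≠ ⊥ := by
  induction s using Finset.cons_induction with
  | empty => simp
  | cons a s ha ih =>
    rw [Finset.sum_cons]
    rw [Ne, EReal.add_eq_bot_iff]
    push_neg
    exact ⟨h a (Finset.mem_cons_self a s), ih fun i hi => h i (Finset.mem_cons_of_mem hi)⟩

lemma sum_eq_top {ι : Type*} [DecidableEq ι] {s : Finset ι} {f : ι → EReal} {i : ι}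
    (hi : i ∈ s) (h : f i = ⊤) (hbot : ∀ j ∈ s, f j ≠ ⊥) : ∑ j ∈ s, f j = ⊤ := by
  rw [← Finset.add_sum_erase s f hi, h]
  exact EReal.top_add_of_ne_bot
    (sum_ne_bot _ _ fun j hj => hbot j (Finset.mem_of_mem_erase hj))

lemma ne_top_of_mem_sum {ι : Type*} [DecidableEq ι] {s : Finset ι} {f : ι → EReal} {i : ι}
    (h : ∑ j ∈ s, f j ≠ ⊤) (hbot : ∀ j ∈ s, f j ≠ ⊥) (hi : i ∈ s) : f i ≠ ⊤ :=
  fun ht => h (sum_eq_top hi ht hbot)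

lemma sum_coe_eq {ι : Type*} (s : Finset ι) (f : ι → EReal)
    (h : ∀ i ∈ s, f i ≠ ⊤) (h' : ∀ i ∈ s, f i ≠ ⊥) :
    ∑ i ∈ s, f i = ((∑ i ∈ s, (f i).toReal : ℝ) : EReal) := by
  rw [coe_sum]
  exact Finset.sum_congr rfl fun i hi => (EReal.coe_toReal (h i hi) (h' i hi)).symm

lemma sum_Icc_one {M : Type*} [AddCommMonoid M] (T : ℕ) (f : ℕ → M) :
    ∑ t ∈ Finset.Icc 1 T, f t = ∑ i ∈ Finset.range T, f (i+1) := by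
  induction T with
  | zero => simp
  | succ n ih =>
    rw [Finset.sum_Icc_succ_top (Nat.one_le_iff_ne_zero.2 (Nat.succ_ne_zero n)) f,
      Finset.sum_range_succ, ih]

lemma harmonic_le (T : ℕ) (hT : 1 ≤ T) :
    ∑ i ∈ Finset.range T, (1:ℝ)/(i+1) ≤ 1 + Real.log T := by
  induction T, hT using Nat.le_induction with
  | base => simp
  | succ n hn ih =>
    rw [Finset.sum_range_succ]
    have hn0 : (0:ℝ) < n := by exact_mod_cast hn
    have hlog : Real.log (n / (n+1)) ≤ (n:ℝ)/(n+1) - 1 :=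
      Real.log_le_sub_one_of_pos (by positivity)
    rw [Real.log_div (by positivity) (by positivity)] at hlog
    have h2 : (n:ℝ)/(n+1) - 1 = -(1/(n+1)) := by field_simp; ring
    push_cast
    rw [h2] at hlog
    linarith

lemma prox_key {E : Type*} [NormedAddCommGroup E] [InnerProductSpace ℝ E]
    {φ : E → EReal} (hconv : ERealConvexOn φ) (hbot : ∀ z, φ z ≠ ⊥)
    {c : ℝ} (hc : 0 ≤ c) {y x : E} (hx : IsProxPtOf c φ y x) (z : E)
    (hz : (c:EReal) * φ z ≠ ⊤) :
    (c:EReal) * φ x ≠ ⊤ ∧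
      ((c:EReal) * φ x).toReal + (1/2) * ‖z - x‖^2 + (1/2) * ‖x - y‖^2
        ≤ ((c:EReal) * φ z).toReal + (1/2) * ‖z - y‖^2 := by
  have hzb : (c:EReal) * φ z ≠ ⊥ := mul_ne_bot hc (hbot z)
  set q : ℝ := ((c:EReal) * φ z).toReal with hq
  have hqe : (c:EReal) * φ z = (q:EReal) := (EReal.coe_toReal hz hzb).symm
  have h1 := hx z
  rw [hqe] at h1
  have hxt : (c:EReal) * φ x ≠ ⊤ := by
    intro ht
    rw [ht, EReal.add_top_of_ne_bot (EReal.coe_ne_bot _), ← EReal.coe_add] at h1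
    exact (EReal.coe_ne_top _) (top_le_iff.1 h1)
  refine ⟨hxt, ?_⟩
  have hxb : (c:EReal) * φ x ≠ ⊥ := mul_ne_bot hc (hbot x)
  set p : ℝ := ((c:EReal) * φ x).toReal with hp
  have hpe : (c:EReal) * φ x = (p:EReal) := (EReal.coe_toReal hxt hxb).symm
  have hzy : ‖z - y‖^2 = ‖x - y‖^2 + 2 * ⟪x - y, z - x⟫ + ‖z - x‖^2 := by
    have : z - y = (x - y) + (z - x) := by abel
    rw [this, norm_add_sq_real]
  rcases eq_or_lt_of_le hc with hc0 | hc0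
  · -- c = 0
    have hxy : x = y := by
      have h2 := hx y
      simp only [← hc0, EReal.coe_zero, EReal.zero_mul] at h2
      rw [sub_self, norm_zero] at h2
      have h3 : ((1/2 * ‖x - y‖^2 : ℝ) : EReal) ≤ ((1/2 * (0:ℝ)^2 : ℝ) : EReal) := by
        simpa using h2
      have h4 : (1/2 : ℝ) * ‖x - y‖^2 ≤ 1/2 * 0^2 := by exact_mod_cast h3
      have : ‖x - y‖ = 0 := by nlinarith [norm_nonneg (x - y), sq_nonneg ‖x-y‖]
      rwa [norm_sub_eq_zero_iff] at this
    have hp0 : p = 0 := by rw [hp, ← hc0]; simp [EReal.zero_mul]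
    have hq0 : q = 0 := by rw [hq, ← hc0]; simp [EReal.zero_mul]
    subst hxy
    rw [hp0, hq0]
    simp only [sub_self, norm_zero]
    nlinarith [sq_nonneg ‖z - x‖]
  · -- c > 0
    have hxtop : φ x ≠ ⊤ := by
      intro h; rw [h, EReal.coe_mul_top_of_pos hc0] at hxt; exact hxt rfl
    have hztop : φ z ≠ ⊤ := by
      intro h; rw [h, EReal.coe_mul_top_of_pos hc0] at hz; exact hz rfl
    set px : ℝ := (φ x).toReal with hpx
    set pz : ℝ := (φ z).toReal with hpz
    have hpxe : φ x = (px:EReal) := (EReal.coe_toReal hxtop (hbot x)).symm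
    have hpze : φ z = (pz:EReal) := (EReal.coe_toReal hztop (hbot z)).symm
    have hpeq : p = c * px := by rw [hp, hpxe, ← EReal.coe_mul, EReal.toReal_coe]
    have hqeq : q = c * pz := by rw [hq, hpze, ← EReal.coe_mul, EReal.toReal_coe]
    set N : ℝ := ‖z - x‖^2 with hN
    have hNn : (0:ℝ) ≤ N := sq_nonneg _
    have key : ∀ t : ℝ, 0 < t → t ≤ 1 →
        0 ≤ (⟪x - y, z - x⟫ + c * pz - c * px) + t * (N/2) := by
      intro t ht0 ht1
      have hm : t • z + (1 - t) • x = x + t • (z - x) := by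
        rw [smul_sub, sub_smul, one_smul]; abel
      have hφm := hconv z x t ht0.le ht1
      rw [hm, hpxe, hpze] at hφm
      have hφm' : φ (x + t • (z - x)) ≤ ((t * pz + (1 - t) * px : ℝ) : EReal) := by
        calc φ (x + t • (z - x)) ≤ (t:EReal) * (pz:EReal) + ((1 - t : ℝ):EReal) * (px:EReal) := hφm
          _ = ((t * pz + (1 - t) * px : ℝ) : EReal) := by
              rw [← EReal.coe_mul, ← EReal.coe_mul, ← EReal.coe_add]
      have h2 := hx (x + t • (z - x))
      rw [hpe] at h2
      have h3 : ((1/2 * ‖x - y‖^2 : ℝ) : EReal) + (p:EReal)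
          ≤ ((1/2 * ‖x + t • (z - x) - y‖^2 : ℝ) : EReal)
            + ((c * (t * pz + (1 - t) * px) : ℝ) : EReal) := by
        refine h2.trans (add_le_add le_rfl ?_)
        calc (c:EReal) * φ (x + t • (z - x))
            ≤ (c:EReal) * ((t * pz + (1 - t) * px : ℝ) : EReal) :=
              mul_le_mul_of_nonneg_left hφm' (EReal.coe_nonneg.2 hc)
          _ = ((c * (t * pz + (1 - t) * px) : ℝ) : EReal) := by rw [← EReal.coe_mul]
      have h4 : (1/2) * ‖x - y‖^2 + p
          ≤ (1/2) * ‖x + t • (z - x) - y‖^2 + c * (t * pz + (1 - t) * px) := by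
        exact_mod_cast h3
      have hnorm : ‖x + t • (z - x) - y‖^2
          = ‖x - y‖^2 + 2 * (t * ⟪x - y, z - x⟫) + t^2 * N := by
        have : x + t • (z - x) - y = (x - y) + t • (z - x) := by abel
        rw [this, norm_add_sq_real, real_inner_smul_right, norm_smul, mul_pow,
          Real.norm_eq_abs, sq_abs, ← hN]
      rw [hnorm, hpeq] at h4
      have h5 : 0 ≤ t * ((⟪x - y, z - x⟫ + c * pz - c * px) + t * (N/2)) := by nlinarith
      by_contra hcon
      push_neg at hcon
      exact absurd h5 (not_le.2 (mul_neg_of_pos_of_neg ht0 hcon))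
    have hA : 0 ≤ ⟪x - y, z - x⟫ + c * pz - c * px :=
      nonneg_of_forall_unit (by linarith) key
    rw [hpeq, hqeq]
    linarith [hzy]

lemma proj_key {E : Type*} [NormedAddCommGroup E] [InnerProductSpace ℝ E]
    {Θ : Set E} (hΘconv : Convex ℝ Θ) {y x : E} (hx : IsProjPt Θ y x)
    {w : E} (hw : w ∈ Θ) : ‖x - w‖^2 ≤ ‖y - w‖^2 := by
  set N : ℝ := ‖w - x‖^2 with hN
  have hNn : (0:ℝ) ≤ N := sq_nonneg _
  have hA : 0 ≤ ⟪x - y, w - x⟫ := by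
    refine nonneg_of_forall_unit (B := N/2) (by linarith) ?_
    intro t ht0 ht1
    have hmem : (1 - t) • x + t • w ∈ Θ :=
      hΘconv hx.1 hw (by linarith) ht0.le (by ring)
    have h1 := hx.2 _ hmem
    have hme : (1 - t) • x + t • w - y = (x - y) + t • (w - x) := by
      rw [smul_sub, sub_smul, one_smul]; abel
    have h2 : ‖x - y‖^2 ≤ ‖(1 - t) • x + t • w - y‖^2 :=
      pow_le_pow_left₀ (norm_nonneg _) h1 2
    rw [hme, norm_add_sq_real, real_inner_smul_right, norm_smul, mul_pow,
      Real.norm_eq_abs, sq_abs, ← hN] at h2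
    have h5 : 0 ≤ t * (⟪x - y, w - x⟫ + t * (N/2)) := by nlinarith
    by_contra hcon
    push_neg at hcon
    exact absurd h5 (not_le.2 (mul_neg_of_pos_of_neg ht0 hcon))
  have hexp : ‖y - w‖^2 = ‖y - x‖^2 + 2 * ⟪y - x, x - w⟫ + ‖x - w‖^2 := by
    have : y - w = (y - x) + (x - w) := by abel
    rw [this, norm_add_sq_real]
  have hin : ⟪y - x, x - w⟫ = ⟪x - y, w - x⟫ := by
    have h1 : y - x = -(x - y) := by abel
    have h2 : x - w = -(w - x) := by abel
    rw [h1, h2, inner_neg_neg]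
  nlinarith [sq_nonneg ‖y - x‖]

lemma chain_key {E : Type*} [NormedAddCommGroup E] [InnerProductSpace ℝ E] {J : ℕ}
    {Θ : Set E} (hΘconv : Convex ℝ Θ)
    (R : Fin J → E → EReal) (hRconv : ∀ j, ERealConvexOn (R j))
    (hRbot : ∀ j z, R j z ≠ ⊥)
    {lam η : ℝ} (hlam : 0 ≤ lam) (hη : 0 < η)
    (ξ : Fin (J+1) → E) (w : E)
    (hsteps : ∀ j : Fin J, IsProxPtOf (η * lam) (R j) (ξ j.castSucc) (ξ j.succ))
    (hii : ∀ j j' : Fin J, j' < j → ∀ a b : E,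
      IsProxPtOf (η * lam) (R j) a b → R j' b ≤ R j' a)
    (hproj : IsProjPt Θ (ξ (Fin.last J)) w)
    (hiii : ∀ a b : E, IsProjPt Θ a b → (∑ j, R j b) ≤ ∑ j, R j a)
    {θ' : E} (hθ' : θ' ∈ Θ)
    (hS'top : (lam:EReal) * (∑ j, R j θ') ≠ ⊤) :
    (lam:EReal) * (∑ j, R j w) ≠ ⊤ ∧
    ((lam:EReal) * (∑ j, R j w)).toReal
      ≤ ((lam:EReal) * (∑ j, R j θ')).toReal
        + 1/(2*η) * (‖θ' - ξ 0‖^2 - ‖w - θ'‖^2) := by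
  set c : ℝ := η * lam with hc
  have hc0 : 0 ≤ c := mul_nonneg hη.le hlam
  have hη' : η ≠ 0 := ne_of_gt hη
  -- finiteness of the comparator values
  have hq : ∀ j : Fin J, (c:EReal) * R j θ' ≠ ⊤ := by
    intro j
    rcases eq_or_lt_of_le hlam with hl0 | hl0
    · have hceq : c = 0 := by rw [hc, ← hl0, mul_zero]
      rw [hceq]; simp
    · have hS : (∑ j, R j θ') ≠ ⊤ := by
        intro h
        rw [h, EReal.coe_mul_top_of_pos hl0] at hS'top
        exact hS'top rfl
      have hfin := ne_top_of_mem_sum (i := j) hS (fun i _ => hRbot i θ') (Finset.mem_univ j)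
      rw [← EReal.coe_toReal hfin (hRbot j θ'), ← EReal.coe_mul]
      exact EReal.coe_ne_top _
  -- the inductive chain inequality
  set F : ℕ → ℝ := fun i =>
    if h : i < J then
      ((c:EReal) * R ⟨i,h⟩ (ξ (⟨i,h⟩ : Fin J).succ)).toReal
        - ((c:EReal) * R ⟨i,h⟩ θ').toReal
    else 0 with hF
  have main : ∀ k, ∀ hk : k ≤ J,
      (∀ j : Fin J, (j:ℕ) < k → (c:EReal) * R j (ξ j.succ) ≠ ⊤) ∧
      (∑ i ∈ Finset.range k, F i) + (1/2) * ‖θ' - ξ ⟨k, Nat.lt_succ_of_le hk⟩‖^2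
        ≤ (1/2) * ‖θ' - ξ 0‖^2 := by
    intro k
    induction k with
    | zero =>
      intro hk
      refine ⟨fun j hj => absurd hj (Nat.not_lt_zero _), ?_⟩
      have h0 : (⟨0, Nat.lt_succ_of_le hk⟩ : Fin (J+1)) = 0 := rfl
      rw [h0]; simp
    | succ k ih =>
      intro hk
      have hkJ : k < J := hk
      obtain ⟨ih1, ih2⟩ := ih (Nat.le_of_lt hkJ)
      set j : Fin J := ⟨k, hkJ⟩ with hjdef
      have hpk := prox_key (hRconv j) (hRbot j) hc0 (hsteps j) θ' (hq j)
      constructor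
      · intro j' hj'
        rcases Nat.lt_or_ge (j' : ℕ) k with h | h
        · exact ih1 j' h
        · have hje : j' = j := Fin.ext (le_antisymm (Nat.lt_succ_iff.1 hj') h)
          rw [hje]; exact hpk.1
      · rw [Finset.sum_range_succ]
        have hFk : F k = ((c:EReal) * R j (ξ j.succ)).toReal
            - ((c:EReal) * R j θ').toReal := by
          rw [hF]; simp only; rw [dif_pos hkJ]
        have e1 : (⟨k+1, Nat.lt_succ_of_le hk⟩ : Fin (J+1)) = j.succ := rfl
        have e2 : (⟨k, Nat.lt_succ_of_le (Nat.le_of_lt hkJ)⟩ : Fin (J+1)) = j.castSucc := rfl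
        rw [e1, hFk]
        rw [e2] at ih2
        have h2 := hpk.2
        linarith [sq_nonneg ‖ξ j.succ - ξ j.castSucc‖]
  obtain ⟨hfin, hsum⟩ := main J le_rfl
  have hlaste : (⟨J, Nat.lt_succ_of_le le_rfl⟩ : Fin (J+1)) = Fin.last J := rfl
  rw [hlaste] at hsum
  have hfin' : ∀ j : Fin J, (c:EReal) * R j (ξ j.succ) ≠ ⊤ := fun j => hfin j j.isLt
  have hFsum : ∑ i ∈ Finset.range J, F i
      = (∑ j : Fin J, ((c:EReal) * R j (ξ j.succ)).toReal)
        - (∑ j : Fin J, ((c:EReal) * R j θ').toReal) := by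
    rw [← Fin.sum_univ_eq_sum_range F J, ← Finset.sum_sub_distrib]
    refine Finset.sum_congr rfl fun j _ => ?_
    rw [hF]; simp only; rw [dif_pos j.isLt]
  rw [hFsum] at hsum
  -- shrinkage along later prox steps
  have shrink : ∀ j : Fin J, R j (ξ (Fin.last J)) ≤ R j (ξ j.succ) := by
    intro j
    have key : ∀ n, (j:ℕ)+1 ≤ n → ∀ hn : n ≤ J,
        R j (ξ ⟨n, Nat.lt_succ_of_le hn⟩) ≤ R j (ξ j.succ) := by
      intro n hn1
      induction n, hn1 using Nat.le_induction with
      | base =>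
        intro hn
        have e : (⟨(j:ℕ)+1, Nat.lt_succ_of_le hn⟩ : Fin (J+1)) = j.succ := rfl
        rw [e]
      | succ n hn ihn =>
        intro hn'
        have hnJ : n < J := hn'
        set jn : Fin J := ⟨n, hnJ⟩ with hjn
        have hlt : j < jn := by
          rw [Fin.lt_def]; exact Nat.lt_of_succ_le hn
        have h1 := hii jn j hlt _ _ (hsteps jn)
        have e1 : (⟨n+1, Nat.lt_succ_of_le hn'⟩ : Fin (J+1)) = jn.succ := rfl
        have e2 : jn.castSucc = (⟨n, Nat.lt_succ_of_le (Nat.le_of_lt hnJ)⟩ : Fin (J+1)) := rfl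
        rw [e1]
        refine h1.trans ?_
        rw [e2]
        exact ihn (Nat.le_of_lt hnJ)
    have h := key J j.isLt le_rfl
    rwa [hlaste] at h
  -- bounding lam * S at the final point
  have hptoReal : ∀ j : Fin J, ((c:EReal) * R j (ξ j.succ)).toReal
      = c * (R j (ξ j.succ)).toReal := fun j => by
    rw [EReal.toReal_mul, EReal.toReal_coe]
  have hqtoReal : ∀ j : Fin J, ((c:EReal) * R j θ').toReal
      = c * (R j θ').toReal := fun j => by
    rw [EReal.toReal_mul, EReal.toReal_coe]
  have hV : (lam:EReal) * (∑ j, R j (ξ (Fin.last J)))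
      ≤ (((1/η) * ∑ j : Fin J, ((c:EReal) * R j (ξ j.succ)).toReal : ℝ) : EReal) := by
    have step1 : (∑ j, R j (ξ (Fin.last J))) ≤ ∑ j, R j (ξ j.succ) :=
      Finset.sum_le_sum fun j _ => shrink j
    have step2 : (lam:EReal) * (∑ j, R j (ξ (Fin.last J)))
        ≤ (lam:EReal) * ∑ j, R j (ξ j.succ) :=
      mul_le_mul_of_nonneg_left step1 (EReal.coe_nonneg.2 hlam)
    rcases eq_or_lt_of_le hlam with hl0 | hl0
    · have hle : (lam:EReal) = 0 := by exact_mod_cast hl0.symm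
      rw [hle, EReal.zero_mul]
      have : (1/η) * ∑ j : Fin J, ((c:EReal) * R j (ξ j.succ)).toReal = 0 := by
        rw [Finset.mul_sum]
        refine Finset.sum_eq_zero fun j _ => ?_
        rw [hptoReal j, hc, ← hl0]; ring
      rw [this]
      exact_mod_cast le_refl (0:ℝ)
    · have hcpos : 0 < c := mul_pos hη hl0
      have hRfin : ∀ j : Fin J, R j (ξ j.succ) ≠ ⊤ := by
        intro j h
        have h2 := hfin' j
        rw [h, EReal.coe_mul_top_of_pos hcpos] at h2
        exact h2 rfl
      have step3 : (∑ j, R j (ξ j.succ))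
          = ((∑ j : Fin J, (R j (ξ j.succ)).toReal : ℝ) : EReal) :=
        sum_coe_eq _ _ (fun j _ => hRfin j) (fun j _ => hRbot j _)
      refine step2.trans ?_
      rw [step3, ← EReal.coe_mul]
      apply le_of_eq
      norm_cast
      rw [Finset.mul_sum, Finset.mul_sum]
      refine Finset.sum_congr rfl fun j _ => ?_
      rw [hptoReal j, hc]
      field_simp
  have hSwbot : (∑ j, R j w) ≠ ⊥ := sum_ne_bot _ _ fun j _ => hRbot j w
  have hwle : (lam:EReal) * (∑ j, R j w)
      ≤ (((1/η) * ∑ j : Fin J, ((c:EReal) * R j (ξ j.succ)).toReal : ℝ) : EReal) :=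
    (mul_le_mul_of_nonneg_left (hiii _ _ hproj) (EReal.coe_nonneg.2 hlam)).trans hV
  have hwtop : (lam:EReal) * (∑ j, R j w) ≠ ⊤ :=
    ne_top_of_le_ne_top (EReal.coe_ne_top _) hwle
  refine ⟨hwtop, ?_⟩
  have hwbot : (lam:EReal) * (∑ j, R j w) ≠ ⊥ := mul_ne_bot hlam hSwbot
  have hu : ((lam:EReal) * (∑ j, R j w)).toReal
      ≤ (1/η) * ∑ j : Fin J, ((c:EReal) * R j (ξ j.succ)).toReal := by
    have h := EReal.toReal_le_toReal hwle hwbot (EReal.coe_ne_top _)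
    rwa [EReal.toReal_coe] at h
  -- sum of q's equals η * c'
  have hqsum : ∑ j : Fin J, ((c:EReal) * R j θ').toReal
      = η * ((lam:EReal) * (∑ j, R j θ')).toReal := by
    rcases eq_or_lt_of_le hlam with hl0 | hl0
    · have : ∀ j : Fin J, ((c:EReal) * R j θ').toReal = 0 := fun j => by
        rw [hqtoReal j, hc, ← hl0]; ring
      rw [Finset.sum_congr rfl fun j _ => this j]
      rw [EReal.toReal_mul, EReal.toReal_coe, ← hl0]
      simp
    · have hS : (∑ j, R j θ') ≠ ⊤ := by
        intro h
        rw [h, EReal.coe_mul_top_of_pos hl0] at hS'top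
        exact hS'top rfl
      have hRfin : ∀ j : Fin J, R j θ' ≠ ⊤ :=
        fun j => ne_top_of_mem_sum (i := j) hS (fun i _ => hRbot i θ') (Finset.mem_univ j)
      have step3 : (∑ j, R j θ') = ((∑ j : Fin J, (R j θ').toReal : ℝ) : EReal) :=
        sum_coe_eq _ _ (fun j _ => hRfin j) (fun j _ => hRbot j _)
      rw [step3, EReal.toReal_mul, EReal.toReal_coe, EReal.toReal_coe]
      rw [Finset.sum_congr rfl fun j _ => hqtoReal j, ← Finset.mul_sum, hc]
      ring
  -- projection is nonexpansive
  have hprojle : ‖w - θ'‖^2 ≤ ‖θ' - ξ (Fin.last J)‖^2 := by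
    have h := proj_key hΘconv hproj hθ'
    rwa [norm_sub_rev (ξ (Fin.last J)) θ'] at h
  -- final arithmetic
  set A : ℝ := ‖θ' - ξ 0‖^2
  set B : ℝ := ‖θ' - ξ (Fin.last J)‖^2
  set W : ℝ := ‖w - θ'‖^2
  set Sp : ℝ := ∑ j : Fin J, ((c:EReal) * R j (ξ j.succ)).toReal
  set Sq : ℝ := ∑ j : Fin J, ((c:EReal) * R j θ').toReal
  set c' : ℝ := ((lam:EReal) * (∑ j, R j θ')).toReal
  -- hsum : Sp - Sq + 1/2 * B ≤ 1/2 * A, hqsum : Sq = η * c'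
  have h1 : (1/η) * Sp ≤ (1/η) * (η * c' + 1/2 * A - 1/2 * B) := by
    apply mul_le_mul_of_nonneg_left _ (by positivity)
    rw [← hqsum]
    linarith
  have h2 : (1/η) * (η * c' + 1/2 * A - 1/2 * B) = c' + 1/(2*η) * (A - B) := by
    field_simp
    ring
  have h3 : 1/(2*η) * (A - B) ≤ 1/(2*η) * (A - W) := by
    apply mul_le_mul_of_nonneg_left _ (by positivity)
    linarith
  linarith

end RegAux

/-- logarithmic regret for strongly convex losses,
learning rates `η_t = 1/(σt)`. -/
theorem regret_log_strongly_convex {d J : ℕ} (hJ : 0 < J) (T : ℕ) (hT : 0 < T)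
    (Θ : Set (EuclideanSpace ℝ (Fin d))) (hΘc : IsClosed Θ) (hΘconv : Convex ℝ Θ)
    (hΘ0 : (0 : EuclideanSpace ℝ (Fin d)) ∈ Θ)
    (lam G σ : ℝ) (hlam : 0 ≤ lam) (hG : 0 ≤ G) (hσ : 0 < σ)
    (L : ℕ → EuclideanSpace ℝ (Fin d) → ℝ)
    (hLconv : ∀ t ∈ Finset.Icc 1 T, ConvexOn ℝ Set.univ (L t))
    (hLlip : ∀ t ∈ Finset.Icc 1 T, ∀ θ₀ ∈ Θ, ∀ g : EuclideanSpace ℝ (Fin d),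
      IsSubgradientAt (L t) g θ₀ → ‖g‖ ≤ G)
    -- each `L t` is `σ`-strongly convex
    (hstrong : ∀ t ∈ Finset.Icc 1 T, ∀ θ₀ g' : EuclideanSpace ℝ (Fin d),
      IsSubgradientAt (L t) g' θ₀ → ∀ θ : EuclideanSpace ℝ (Fin d),
        L t θ₀ + (⟪g', θ - θ₀⟫ : ℝ) + σ / 2 * ‖θ - θ₀‖ ^ 2 ≤ L t θ)
    (R : Fin J → EuclideanSpace ℝ (Fin d) → EReal)
    (hRconv : ∀ j, ERealConvexOn (R j)) (hRlsc : ∀ j, LowerSemicontinuous (R j))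
    (hRprop : ∀ j, ERealProper (R j))
    (hRnonneg : ∀ θ, (0 : EReal) ≤ ∑ j, R j θ)
    (hR0 : (∑ j, R j (0 : EuclideanSpace ℝ (Fin d))) = 0)
    -- condition (ii), for every step size used
    (hii : ∀ t ∈ Finset.Icc 1 T, ∀ j j' : Fin J, j' < j →
      ∀ θ θ' : EuclideanSpace ℝ (Fin d),
      IsProxPtOf (1 / (σ * t) * lam) (R j) θ θ' → R j' θ' ≤ R j' θ)
    -- condition (iii)
    (hiii : ∀ θ θ' : EuclideanSpace ℝ (Fin d), IsProjPt Θ θ θ' →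
      (∑ j, R j θ') ≤ ∑ j, R j θ)
    -- the iterates of the algorithm, with learning rates `η_t = 1/(σt)`
    (θ : ℕ → EuclideanSpace ℝ (Fin d)) (g : ℕ → EuclideanSpace ℝ (Fin d))
    (θtil : ℕ → Fin (J + 1) → EuclideanSpace ℝ (Fin d))
    (hθ1 : θ 1 = 0)
    (hg : ∀ t ∈ Finset.Icc 1 T, IsSubgradientAt (L t) (g t) (θ t))
    (h0 : ∀ t ∈ Finset.Icc 1 T, θtil t 0 = θ t - (1 / (σ * t)) • g t)
    (hsteps : ∀ t ∈ Finset.Icc 1 T, ∀ j : Fin J,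
      IsProxPtOf (1 / (σ * t) * lam) (R j) (θtil t j.castSucc) (θtil t j.succ))
    (hproj : ∀ t ∈ Finset.Icc 1 T, IsProjPt Θ (θtil t (Fin.last J)) (θ (t + 1))) :
    -- Reg_T ≤ G²(1 + log T)/(2σ)
    ∀ θ' ∈ Θ,
      (∑ t ∈ Finset.Icc 1 T, ((lam : EReal) * (∑ j, R j (θ t)) + ((L t (θ t) : ℝ) : EReal)))
        ≤ (∑ t ∈ Finset.Icc 1 T, ((lam : EReal) * (∑ j, R j θ') + ((L t θ' : ℝ) : EReal)))
          + ((G ^ 2 * (1 + Real.log T) / (2 * σ) : ℝ) : EReal) := by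
  intro θ' hθ'
  classical
  have hmem : ∀ t ∈ Finset.Icc 1 T, θ t ∈ Θ := by
    intro t ht
    obtain ⟨h1, h2⟩ := Finset.mem_Icc.1 ht
    obtain ⟨s, rfl⟩ := Nat.exists_eq_add_of_le h1
    cases s with
    | zero => rw [show 1 + 0 = 1 from rfl, hθ1]; exact hΘ0
    | succ s =>
      have hmem' : s + 1 ∈ Finset.Icc 1 T := Finset.mem_Icc.2 ⟨by omega, by omega⟩
      have h := (hproj (s+1) hmem').1
      have he : 1 + (s + 1) = s + 1 + 1 := by omega
      rw [he]
      exact h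
  by_cases htop : (lam:EReal) * (∑ j, R j θ') = ⊤
  · have hterm : ∀ t ∈ Finset.Icc 1 T,
        ((lam:EReal) * (∑ j, R j θ') + ((L t θ' : ℝ) : EReal)) = ⊤ := by
      intro t _
      rw [htop]
      exact EReal.top_add_of_ne_bot (EReal.coe_ne_bot _)
    have hsum : (∑ t ∈ Finset.Icc 1 T,
        ((lam:EReal) * (∑ j, R j θ') + ((L t θ' : ℝ) : EReal))) = ⊤ := by
      refine RegAux.sum_eq_top (i := 1) (Finset.mem_Icc.2 ⟨le_rfl, hT⟩)
        (hterm 1 (Finset.mem_Icc.2 ⟨le_rfl, hT⟩)) fun t ht => ?_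
      rw [hterm t ht]
      exact top_ne_bot
    rw [hsum, EReal.top_add_of_ne_bot (EReal.coe_ne_bot _)]
    exact le_top
  · have hRbot : ∀ (j : Fin J) (z : EuclideanSpace ℝ (Fin d)), R j z ≠ ⊥ :=
      fun j z => (hRprop j).2 z
    have hS'bot : (lam:EReal) * (∑ j, R j θ') ≠ ⊥ :=
      RegAux.mul_ne_bot hlam (RegAux.sum_ne_bot _ _ fun j _ => hRbot j θ')
    set c' : ℝ := ((lam:EReal) * (∑ j, R j θ')).toReal with hc'
    have hc'e : (lam:EReal) * (∑ j, R j θ') = (c':EReal) := (EReal.coe_toReal htop hS'bot).symm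
    -- per-step estimate from the chain lemma
    have hstep : ∀ t ∈ Finset.Icc 1 T,
        (lam:EReal) * (∑ j, R j (θ (t+1))) ≠ ⊤ ∧
        ((lam:EReal) * (∑ j, R j (θ (t+1)))).toReal
          ≤ c' + 1/(2*(1/(σ*(t:ℝ)))) * (‖θ' - θtil t 0‖^2 - ‖θ (t+1) - θ'‖^2) := by
      intro t ht
      have h1t : 1 ≤ t := (Finset.mem_Icc.1 ht).1
      have htR : (1:ℝ) ≤ (t:ℝ) := by exact_mod_cast h1t
      have hη : (0:ℝ) < 1/(σ*(t:ℝ)) := div_pos one_pos (mul_pos hσ (by linarith))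
      have hck := RegAux.chain_key hΘconv R hRconv hRbot hlam hη (θtil t) (θ (t+1))
        (hsteps t ht) (fun j j' h a b hp => hii t ht j j' h a b hp) (hproj t ht)
        (fun a b hp => hiii a b hp) hθ' htop
      exact ⟨hck.1, hck.2⟩
    set u : ℕ → ℝ := fun t => ((lam:EReal) * (∑ j, R j (θ t))).toReal with hu
    have hu1e : (lam:EReal) * (∑ j, R j (θ 1)) = ((0:ℝ) : EReal) := by
      rw [hθ1, hR0, mul_zero]
      simp
    have hu1 : u 1 = 0 := by rw [hu]; simp only; rw [hu1e, EReal.toReal_coe]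
    have hubot : ∀ t : ℕ, (lam:EReal) * (∑ j, R j (θ t)) ≠ ⊥ :=
      fun t => RegAux.mul_ne_bot hlam (RegAux.sum_ne_bot _ _ fun j _ => hRbot j _)
    have hufin : ∀ t ∈ Finset.Icc 1 T,
        (lam:EReal) * (∑ j, R j (θ t)) = ((u t : ℝ) : EReal) := by
      intro t ht
      obtain ⟨h1, h2⟩ := Finset.mem_Icc.1 ht
      have htop' : (lam:EReal) * (∑ j, R j (θ t)) ≠ ⊤ := by
        obtain ⟨s, rfl⟩ := Nat.exists_eq_add_of_le h1
        cases s with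
        | zero => rw [show 1 + 0 = 1 from rfl, hu1e]; exact EReal.coe_ne_top _
        | succ s =>
          have hmem' : s + 1 ∈ Finset.Icc 1 T := Finset.mem_Icc.2 ⟨by omega, by omega⟩
          have h := (hstep (s+1) hmem').1
          have he : 1 + (s + 1) = s + 1 + 1 := by omega
          rw [he]
          exact h
      exact (EReal.coe_toReal htop' (hubot t)).symm
    have hnng : ∀ t : ℕ, (0:EReal) ≤ (lam:EReal) * (∑ j, R j (θ t)) :=
      fun t => mul_nonneg (EReal.coe_nonneg.2 hlam) (hRnonneg _)
    have hufinT1 : (lam:EReal) * (∑ j, R j (θ (T+1))) = ((u (T+1) : ℝ):EReal) :=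
      (EReal.coe_toReal (hstep T (Finset.mem_Icc.2 ⟨hT, le_rfl⟩)).1 (hubot (T+1))).symm
    have hunnT1 : 0 ≤ u (T+1) := by
      have h := hnng (T+1)
      rw [hufinT1] at h
      exact_mod_cast h
    -- the per-round real inequality, incorporating the gradient step and strong convexity
    set b : ℕ → ℝ := fun s => σ*((s:ℝ)-1)/2 * ‖θ s - θ'‖^2 with hb
    have hkey : ∀ t ∈ Finset.Icc 1 T,
        u (t+1) + L t (θ t) ≤ c' + L t θ' + (b t - b (t+1)) + G^2/(2*(σ*(t:ℝ))) := by
      intro t ht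
      have h1t : 1 ≤ t := (Finset.mem_Icc.1 ht).1
      have htR : (1:ℝ) ≤ (t:ℝ) := by exact_mod_cast h1t
      have hσt : (0:ℝ) < σ*(t:ℝ) := mul_pos hσ (by linarith)
      have hbd := (hstep t ht).2
      -- expand the norm of θ' - θtil t 0
      have h0e := h0 t ht
      have hsplit : θ' - θtil t 0 = (θ' - θ t) + (1/(σ*(t:ℝ))) • g t := by
        rw [h0e]; abel
      have hnorm : ‖θ' - θtil t 0‖^2 = ‖θ' - θ t‖^2
          + 2*((1/(σ*(t:ℝ))) * ⟪θ' - θ t, g t⟫) + (1/(σ*(t:ℝ)))^2 * ‖g t‖^2 := by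
        rw [hsplit, norm_add_sq_real, real_inner_smul_right, norm_smul, mul_pow,
          Real.norm_eq_abs, sq_abs]
      have hsc := hstrong t ht (θ t) (g t) (hg t ht) θ'
      have hinn : ⟪θ' - θ t, g t⟫ = ⟪g t, θ' - θ t⟫ := real_inner_comm _ _
      have hGt : ‖g t‖ ≤ G := hLlip t ht (θ t) (hmem t ht) (g t) (hg t ht)
      have hg2 : ‖g t‖^2 ≤ G^2 := by nlinarith [norm_nonneg (g t)]
      have hns : ‖θ' - θ t‖ = ‖θ t - θ'‖ := norm_sub_rev _ _
      have hns2 : ‖θ' - θ t‖^2 = ‖θ t - θ'‖^2 := by rw [hns]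
      rw [hnorm, hns2] at hbd
      have hexpand : 1/(2*(1/(σ*(t:ℝ)))) * ((‖θ t - θ'‖^2
            + 2*((1/(σ*(t:ℝ))) * ⟪θ' - θ t, g t⟫) + (1/(σ*(t:ℝ)))^2 * ‖g t‖^2)
            - ‖θ (t+1) - θ'‖^2)
          = σ*(t:ℝ)/2 * (‖θ t - θ'‖^2 - ‖θ (t+1) - θ'‖^2) + ⟪θ' - θ t, g t⟫
            + ‖g t‖^2/(2*(σ*(t:ℝ))) := by
        field_simp
        ring
      rw [hexpand] at hbd
      have h2σt : (0:ℝ) < 2*(σ*(t:ℝ)) := by linarith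
      have hdiv : ‖g t‖^2/(2*(σ*(t:ℝ))) ≤ G^2/(2*(σ*(t:ℝ))) := (div_le_div_iff_of_pos_right h2σt).2 hg2
      have hbt : b t = σ*((t:ℝ)-1)/2 * ‖θ t - θ'‖^2 := rfl
      have hbt1 : b (t+1) = σ*(t:ℝ)/2 * ‖θ (t+1) - θ'‖^2 := by
        rw [hb]; simp only; push_cast; ring_nf
      rw [hinn] at hbd
      rw [hns2] at hsc
      rw [hbt, hbt1]
      rw [real_inner_comm] at hinn
      linarith [hsc, hbd, hdiv]
    -- reduce the EReal statement to a real inequality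
    have hL : (∑ t ∈ Finset.Icc 1 T, ((lam:EReal) * (∑ j, R j (θ t)) + ((L t (θ t) : ℝ) : EReal)))
        = (((∑ t ∈ Finset.Icc 1 T, (u t + L t (θ t))) : ℝ) : EReal) := by
      rw [RegAux.coe_sum]
      refine Finset.sum_congr rfl fun t ht => ?_
      rw [hufin t ht, ← EReal.coe_add]
    have hRs : (∑ t ∈ Finset.Icc 1 T, ((lam:EReal) * (∑ j, R j θ') + ((L t θ' : ℝ) : EReal)))
        = (((∑ t ∈ Finset.Icc 1 T, (c' + L t θ')) : ℝ) : EReal) := by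
      rw [RegAux.coe_sum]
      refine Finset.sum_congr rfl fun t ht => ?_
      rw [hc'e, ← EReal.coe_add]
    rw [hL, hRs, ← EReal.coe_add, EReal.coe_le_coe_iff]
    have hIcc1 : ∑ t ∈ Finset.Icc 1 T, (u t + L t (θ t))
        = ∑ i ∈ Finset.range T, (u (i+1) + L (i+1) (θ (i+1))) := RegAux.sum_Icc_one T _
    have hIcc2 : ∑ t ∈ Finset.Icc 1 T, (c' + L t θ')
        = ∑ i ∈ Finset.range T, (c' + L (i+1) θ') := RegAux.sum_Icc_one T _
    rw [hIcc1, hIcc2]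
    obtain ⟨n, rfl⟩ : ∃ n, T = n + 1 := ⟨T - 1, by omega⟩
    have hmemIcc : ∀ i ∈ Finset.range (n+1), i + 1 ∈ Finset.Icc 1 (n+1) := by
      intro i hi
      rw [Finset.mem_range] at hi
      exact Finset.mem_Icc.2 ⟨by omega, by omega⟩
    have hshift : ∑ i ∈ Finset.range (n+1), u (i+1) ≤ ∑ i ∈ Finset.range (n+1), u (i+1+1) := by
      rw [Finset.sum_range_succ (fun i => u (i+1+1)) n,
        Finset.sum_range_succ' (fun i => u (i+1)) n]
      have h01 : (0:ℕ) + 1 = 1 := rfl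
      rw [h01, hu1]
      have hnn2 : 0 ≤ u (n+1+1) := hunnT1
      linarith
    have hsum1 : ∑ i ∈ Finset.range (n+1), (u (i+1) + L (i+1) (θ (i+1)))
        ≤ ∑ i ∈ Finset.range (n+1), (u (i+1+1) + L (i+1) (θ (i+1))) := by
      rw [Finset.sum_add_distrib, Finset.sum_add_distrib]
      linarith [hshift]
    have hsum2 : ∑ i ∈ Finset.range (n+1), (u (i+1+1) + L (i+1) (θ (i+1)))
        ≤ ∑ i ∈ Finset.range (n+1),
            (c' + L (i+1) θ' + (b (i+1) - b (i+1+1)) + G^2/(2*(σ*((i+1:ℕ):ℝ)))) :=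
      Finset.sum_le_sum fun i hi => hkey (i+1) (hmemIcc i hi)
    have htel : ∑ i ∈ Finset.range (n+1), (b (i+1) - b (i+1+1)) = b 1 - b (n+1+1) :=
      Finset.sum_range_sub' (fun i => b (i+1)) (n+1)
    have hb1 : b 1 = 0 := by rw [hb]; simp
    have hbT : 0 ≤ b (n+1+1) := by
      rw [hb]
      simp only
      have he : ((n+1+1:ℕ):ℝ) - 1 = (n:ℝ) + 1 := by push_cast; ring
      rw [he]
      positivity
    have hharm : ∑ i ∈ Finset.range (n+1), G^2/(2*(σ*((i+1:ℕ):ℝ)))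
        ≤ G^2 * (1 + Real.log ((n+1:ℕ):ℝ)) / (2*σ) := by
      have he : ∀ i ∈ Finset.range (n+1),
          G^2/(2*(σ*((i+1:ℕ):ℝ))) = G^2/(2*σ) * (1/((i:ℝ)+1)) := by
        intro i _
        have hcast : ((i+1:ℕ):ℝ) = (i:ℝ)+1 := by push_cast; ring
        rw [hcast]
        have hi1 : (0:ℝ) < (i:ℝ)+1 := by positivity
        field_simp
      rw [Finset.sum_congr rfl he, ← Finset.mul_sum]
      have hh := RegAux.harmonic_le (n+1) (by omega)
      have hg2 : (0:ℝ) ≤ G^2/(2*σ) := by positivity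
      calc G^2/(2*σ) * ∑ i ∈ Finset.range (n+1), (1:ℝ)/((i:ℝ)+1)
          ≤ G^2/(2*σ) * (1 + Real.log ((n+1:ℕ):ℝ)) :=
            mul_le_mul_of_nonneg_left hh hg2
        _ = G^2 * (1 + Real.log ((n+1:ℕ):ℝ)) / (2*σ) := by ring
    have hsplit2 : ∑ i ∈ Finset.range (n+1),
        (c' + L (i+1) θ' + (b (i+1) - b (i+1+1)) + G^2/(2*(σ*((i+1:ℕ):ℝ))))
        = ∑ i ∈ Finset.range (n+1), (c' + L (i+1) θ')
          + ∑ i ∈ Finset.range (n+1), (b (i+1) - b (i+1+1))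
          + ∑ i ∈ Finset.range (n+1), G^2/(2*(σ*((i+1:ℕ):ℝ))) := by
      rw [← Finset.sum_add_distrib, ← Finset.sum_add_distrib]
    linarith [hsum1, hsum2, hsplit2, htel, hb1, hbT, hharm]
end
end
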